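/- Let q ≥ 1 be an integer, α > 0, and let n_1 ≥ n_2 ≥ ... ≥ n_q be non-negative integers in decreasing order with n = ∑_k n_k > 0; let k' be the largest index with n_{k'} > 0 and let m = #{k : n_k > 0}. Then the local local BDeu score -log pGam(α, n) + ∑_{k=1}^q log pGam(α/q, n_k) is at most -m·log q - ∑_{l=1}^{k'-1} log(1 + n_l/α). -/

import Mathlib

/-- `pGam α x = Γ(x+α)/Γ(α)`. -/
noncomputable def pGam (α : ℝ) (x : ℕ) : ℝ := Real.Gamma (x + α) / Real.Gamma α

open Finset

noncomputable def Pr (α : ℝ) (x : ℕ) : ℝ := ∏ i ∈ Finset.range x, (α + i)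

lemma Pr_pos {α : ℝ} (hα : 0 < α) (x : ℕ) : 0 < Pr α x := by
  apply Finset.prod_pos; intro i _; positivity

lemma pGam_eq {α : ℝ} (hα : 0 < α) (x : ℕ) : pGam α x = Pr α x := by
  induction x with
  | zero => simp [pGam, Pr, div_self (Real.Gamma_pos_of_pos hα).ne']
  | succ m ih =>
    have h : ((m:ℕ)+1 : ℕ) + α = ((m:ℝ) + α) + 1 := by push_cast; ring
    rw [pGam, h, Real.Gamma_add_one (by positivity), Pr, Finset.prod_range_succ]
    rw [pGam] at ih
    rw [mul_div_assoc, ih, Pr]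
    ring

lemma Pr_ratio {α β : ℝ} (hβ : 0 < β) (hβα : β ≤ α) {x : ℕ} (hx : 1 ≤ x) :
    (α / β) * Pr β x ≤ Pr α x := by
  have hα : 0 < α := lt_of_lt_of_le hβ hβα
  obtain ⟨m, rfl⟩ := Nat.exists_eq_add_of_le hx
  rw [Pr, Pr, add_comm 1 m, Finset.prod_range_succ', Finset.prod_range_succ']
  have h1 : ∏ i ∈ range m, (β + ↑(i+1)) ≤ ∏ i ∈ range m, (α + ↑(i+1)) := by
    apply Finset.prod_le_prod
    · intro i _; positivity
    · intro i _; exact add_le_add_left hβα _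
  have e1 : (β + ((0:ℕ):ℝ)) = β := by norm_num
  have e2 : (α + ((0:ℕ):ℝ)) = α := by norm_num
  rw [e1, e2]
  have e3 : α / β * ((∏ i ∈ range m, (β + ↑(i+1))) * β)
      = (∏ i ∈ range m, (β + ↑(i+1))) * α := by
    field_simp
  rw [e3]
  exact mul_le_mul_of_nonneg_right h1 hα.le

lemma Pr_supermul {α : ℝ} (hα : 0 < α) (x : ℕ) {y : ℕ} (hy : 1 ≤ y) :
    Pr α x * Pr α y * (1 + x / α) ≤ Pr α (x + y) := by
  rw [Pr, Pr, Pr, Finset.prod_range_add]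
  have hx0 : (0:ℝ) ≤ ∏ i ∈ range x, (α + i) := le_of_lt (by exact Pr_pos hα x)
  have key : (∏ i ∈ range y, (α + ↑i)) * (1 + (x:ℝ) / α) ≤ ∏ i ∈ range y, (α + ↑(x + i)) := by
    obtain ⟨m, rfl⟩ := Nat.exists_eq_add_of_le hy
    rw [add_comm 1 m, Finset.prod_range_succ', Finset.prod_range_succ']
    have h1 : ∏ i ∈ range m, (α + ↑(i+1)) ≤ ∏ i ∈ range m, (α + ↑(x + (i+1))) := by
      apply Finset.prod_le_prod
      · intro i _; positivity
      · intro i _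
        exact add_le_add_right (Nat.cast_le.2 (Nat.le_add_left _ _)) α
    have e0 : (α + ((0:ℕ):ℝ)) * (1 + (x:ℝ)/α) = α + ↑(x + 0) := by
      push_cast; field_simp; ring
    calc (∏ i ∈ range m, (α + ↑(i+1))) * (α + ((0:ℕ):ℝ)) * (1 + (x:ℝ)/α)
        = (∏ i ∈ range m, (α + ↑(i+1))) * ((α + ((0:ℕ):ℝ)) * (1 + (x:ℝ)/α)) := by ring
      _ = (∏ i ∈ range m, (α + ↑(i+1))) * (α + ↑(x + 0)) := by rw [e0]
      _ ≤ (∏ i ∈ range m, (α + ↑(x + (i+1)))) * (α + ↑(x + 0)) := by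
          apply mul_le_mul_of_nonneg_right h1
          positivity
  calc (∏ i ∈ range x, (α + ↑i)) * (∏ i ∈ range y, (α + ↑i)) * (1 + (x:ℝ) / α)
      = (∏ i ∈ range x, (α + ↑i)) * ((∏ i ∈ range y, (α + ↑i)) * (1 + (x:ℝ) / α)) := by ring
    _ ≤ (∏ i ∈ range x, (α + ↑i)) * ∏ i ∈ range y, (α + ↑(x + i)) :=
        mul_le_mul_of_nonneg_left key hx0

/-- Counts in decreasing order (0-based); `k'` is the (0-based) largest index with a
positive count, `m` the number of non-zero counts. -/
theorem stmt_7 (q : ℕ) (hq : 1 ≤ q) (α : ℝ) (hα : 0 < α) (n : ℕ → ℕ) (k' : ℕ)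
    (hdec : ∀ i j, i ≤ j → j < q → n j ≤ n i)
    (hN : 0 < ∑ k ∈ Finset.range q, n k)
    (hk' : k' < q) (hk'pos : 0 < n k')
    (hk'max : ∀ l, k' < l → l < q → n l = 0) :
    -Real.log (pGam α (∑ k ∈ Finset.range q, n k)) +
        ∑ k ∈ Finset.range q, Real.log (pGam (α / q) (n k))
      ≤ -(((Finset.range q).filter fun k => 0 < n k).card : ℝ) * Real.log q -
          ∑ l ∈ Finset.range k', Real.log (1 + (n l : ℝ) / α) := by
  have hq0 : (0:ℝ) < q := by exact_mod_cast hq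
  have hαq : 0 < α / q := by positivity
  have hαqα : α / q ≤ α := by
    have h1 : (1:ℝ) ≤ q := by exact_mod_cast hq
    rw [div_le_iff₀ hq0]; nlinarith
  -- chain lemma
  have chain : ∀ s, s ≤ k' →
      (∏ k ∈ Finset.range (s+1), Pr α (n k)) * ∏ l ∈ Finset.range s, (1 + (n l : ℝ) / α)
        ≤ Pr α (∑ k ∈ Finset.range (s+1), n k) := by
    intro s
    induction s with
    | zero => simp
    | succ s ih =>
      intro hs
      have ih' := ih (Nat.le_of_succ_le hs)
      have hns1 : 1 ≤ n (s+1) := by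
        have := hdec (s+1) k' hs hk'
        omega
      have hS : (n s : ℝ) ≤ (∑ k ∈ Finset.range (s+1), n k : ℕ) := by
        exact_mod_cast Finset.single_le_sum (f := n) (fun i _ => Nat.zero_le _)
          (Finset.self_mem_range_succ s)
      have hsuper := Pr_supermul hα (∑ k ∈ Finset.range (s+1), n k) hns1
      rw [Finset.sum_range_succ (n := s+1),
        Finset.prod_range_succ (f := fun k => Pr α (n k)) (n := s+1),
        Finset.prod_range_succ (f := fun l => 1 + (n l : ℝ) / α) (n := s)]
      have hfac : 1 + (n s : ℝ) / α ≤ 1 + (∑ k ∈ Finset.range (s+1), n k : ℕ) / α := by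
        gcongr
      have hPpos : 0 < Pr α (∑ k ∈ Finset.range (s+1), n k) := Pr_pos hα _
      have hnpos : 0 < Pr α (n (s+1)) := Pr_pos hα _
      have hCpos : 0 < ∏ l ∈ Finset.range s, (1 + (n l : ℝ) / α) := by
        apply Finset.prod_pos; intro i _; positivity
      have hprodpos : 0 < ∏ k ∈ Finset.range (s+1), Pr α (n k) := by
        apply Finset.prod_pos; intro i _; exact Pr_pos hα _
      calc (∏ k ∈ Finset.range (s+1), Pr α (n k)) * Pr α (n (s+1)) *
            ((∏ l ∈ Finset.range s, (1 + (n l : ℝ) / α)) * (1 + (n s : ℝ) / α))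
          ≤ Pr α (∑ k ∈ Finset.range (s+1), n k) * Pr α (n (s+1)) * (1 + (n s : ℝ) / α) := by
            have h1 : (∏ k ∈ Finset.range (s+1), Pr α (n k)) *
                (∏ l ∈ Finset.range s, (1 + (n l : ℝ) / α)) * (Pr α (n (s+1)) * (1 + (n s : ℝ)/α))
                ≤ Pr α (∑ k ∈ Finset.range (s+1), n k) * (Pr α (n (s+1)) * (1 + (n s : ℝ)/α)) := by
              apply mul_le_mul_of_nonneg_right ih'
              positivity
            nlinarith [h1]
        _ ≤ Pr α (∑ k ∈ Finset.range (s+1), n k) * Pr α (n (s+1)) *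
              (1 + ((∑ k ∈ Finset.range (s+1), n k : ℕ) : ℝ) / α) := by
            apply mul_le_mul_of_nonneg_left hfac
            positivity
        _ ≤ Pr α (∑ k ∈ Finset.range (s+1), n k + n (s+1)) := hsuper
  have hchain := chain k' le_rfl
  -- sum over range (k'+1) equals sum over range q
  have hsum : ∑ k ∈ Finset.range (k'+1), n k = ∑ k ∈ Finset.range q, n k := by
    apply Finset.sum_subset (Finset.range_subset_range.2 hk')
    intro x hx hnx
    simp only [Finset.mem_range] at hx hnx
    exact hk'max x (by omega) hx
  have hprodext : ∏ k ∈ Finset.range (k'+1), Pr α (n k) = ∏ k ∈ Finset.range q, Pr α (n k) := by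
    apply Finset.prod_subset (Finset.range_subset_range.2 hk')
    intro x hx hnx
    simp only [Finset.mem_range] at hx hnx
    rw [hk'max x (by omega) hx]
    simp [Pr]
  rw [hsum, hprodext] at hchain
  -- q-factor step
  have hqstep : ∏ k ∈ Finset.range q, ((if 0 < n k then (q:ℝ) else 1) * Pr (α/q) (n k))
      ≤ ∏ k ∈ Finset.range q, Pr α (n k) := by
    apply Finset.prod_le_prod
    · intro i _
      have := Pr_pos hαq (n i)
      split <;> positivity
    · intro i _
      by_cases h : 0 < n i
      · simp only [if_pos h]
        have := Pr_ratio hαq hαqα (x := n i) h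
        have he : α / (α / q) = q := by field_simp
        rw [he] at this
        exact this
      · simp only [if_neg h]
        have : n i = 0 := by omega
        rw [this]
        simp [Pr]
  rw [Finset.prod_mul_distrib, Finset.prod_ite, Finset.prod_const, Finset.prod_const_one,
    mul_one] at hqstep
  set M := ((Finset.range q).filter fun k => 0 < n k).card with hM
  set N := ∑ k ∈ Finset.range q, n k with hNdef
  set A := ∏ k ∈ Finset.range q, Pr (α/q) (n k) with hA
  set C := ∏ l ∈ Finset.range k', (1 + (n l : ℝ) / α) with hC
  have hApos : 0 < A := Finset.prod_pos (fun i _ => Pr_pos hαq _)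
  have hCpos : 0 < C := Finset.prod_pos (fun i _ => by positivity)
  have hGpos : 0 < Pr α N := Pr_pos hα _
  have hfinal : (q:ℝ)^M * A * C ≤ Pr α N := by
    calc (q:ℝ)^M * A * C ≤ (∏ k ∈ Finset.range q, Pr α (n k)) * C := by
          apply mul_le_mul_of_nonneg_right hqstep hCpos.le
      _ ≤ Pr α N := hchain
  have hlog : Real.log ((q:ℝ)^M * A * C) ≤ Real.log (Pr α N) :=
    Real.log_le_log (by positivity) hfinal
  rw [Real.log_mul (by positivity) hCpos.ne', Real.log_mul (by positivity) hApos.ne',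
    Real.log_pow] at hlog
  have hlogA : Real.log A = ∑ k ∈ Finset.range q, Real.log (Pr (α/q) (n k)) := by
    rw [hA, Real.log_prod]
    intro i _
    exact (Pr_pos hαq _).ne'
  have hlogC : Real.log C = ∑ l ∈ Finset.range k', Real.log (1 + (n l : ℝ) / α) := by
    rw [hC, Real.log_prod]
    intro i _
    have : (0:ℝ) < 1 + (n i : ℝ) / α := by positivity
    exact this.ne'
  rw [hlogA, hlogC] at hlog
  simp only [pGam_eq hα, pGam_eq hαq]
  linarith
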